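/- Let p be a prime, and let X, Y ⊆ 𝔽_p be finite nonempty sets. Let K = max_{y ∈ Y} |X + y·X|. Then there exist elements x̃₁, x̃₂ ∈ X such that the number of triples (x₁, x₂, y) ∈ X × X × Y satisfying x₂ − x̃₂ = y·(x₁ − x̃₁) is at least |Y|·|X|² / K. -/

import Mathlib

open Pointwise Finset

lemma cs_count {α β : Type*} [DecidableEq α] [DecidableEq β] (A : Finset α) (T : Finset β)
    (g : α → β) (hg : ∀ a ∈ A, g a ∈ T) :
    ((A.card : ℝ)) ^ 2 ≤ (T.card : ℝ) *
      (((A ×ˢ A).filter fun q => g q.1 = g q.2).card : ℝ) := by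
  have h1 : A.card = ∑ t ∈ T, (A.filter fun a => g a = t).card :=
    card_eq_sum_card_fiberwise hg
  have h2 : ((A ×ˢ A).filter fun q => g q.1 = g q.2).card
      = ∑ t ∈ T, ((A.filter fun a => g a = t).card) ^ 2 := by
    rw [card_eq_sum_card_fiberwise (f := fun q : α × α => g q.1) (t := T)
      (fun q hq => hg q.1 (mem_product.1 (mem_filter.1 hq).1).1)]
    refine sum_congr rfl fun t _ => ?_
    have : (((A ×ˢ A).filter fun q => g q.1 = g q.2).filter fun q => g q.1 = t)
        = (A.filter fun a => g a = t) ×ˢ (A.filter fun a => g a = t) := by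
      ext q
      simp only [mem_filter, mem_product]
      constructor
      · rintro ⟨⟨⟨hq1, hq2⟩, he⟩, ht⟩
        exact ⟨⟨hq1, ht⟩, hq2, he ▸ ht⟩
      · rintro ⟨⟨hq1, ht1⟩, hq2, ht2⟩
        exact ⟨⟨⟨hq1, hq2⟩, ht1.trans ht2.symm⟩, ht1⟩
    rw [this, card_product, sq]
  have := sq_sum_le_card_mul_sum_sq (s := T)
    (f := fun t => ((A.filter fun a => g a = t).card : ℝ))
  calc ((A.card : ℝ)) ^ 2 = (∑ t ∈ T, ((A.filter fun a => g a = t).card : ℝ)) ^ 2 := by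
        rw [← Nat.cast_sum, ← h1]
    _ ≤ (T.card : ℝ) * ∑ t ∈ T, ((A.filter fun a => g a = t).card : ℝ) ^ 2 := this
    _ = _ := by rw [h2]; push_cast; ring

theorem stmt_13 (p : ℕ) (hp : p.Prime) (X Y : Finset (ZMod p))
    (hX : X.Nonempty) (hY : Y.Nonempty) :
    ∃ xt₁ ∈ X, ∃ xt₂ ∈ X,
      (Y.card : ℝ) * (X.card : ℝ) ^ 2 /
          ((Y.sup' hY fun y => (X + y • X).card : ℝ))
        ≤ ((((X ×ˢ X ×ˢ Y).filter fun t : ZMod p × ZMod p × ZMod p =>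
            t.2.1 - xt₂ = t.2.2 * (t.1 - xt₁)).card : ℝ)) := by
  set K : ℝ := (Y.sup' hY fun y => ((X + y • X).card : ℝ)) with hKdef
  -- K is positive
  obtain ⟨y₀, hy₀⟩ := hY
  have hK0 : 0 < K := by
    have h1 : (X + y₀ • X).Nonempty := hX.add (hX.smul_finset)
    have : ((X + y₀ • X).card : ℝ) ≤ K := by
      rw [hKdef]; exact le_sup' (fun y => ((X + y • X).card : ℝ)) hy₀
    have hc : 0 < (X + y₀ • X).card := card_pos.2 h1
    calc (0:ℝ) < ((X + y₀ • X).card : ℝ) := by exact_mod_cast hc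
      _ ≤ K := this
  have hXc : 0 < (X.card : ℝ) := by exact_mod_cast card_pos.2 hX
  -- the master set
  set M : Finset ((ZMod p × ZMod p) × (ZMod p × ZMod p × ZMod p)) :=
    ((X ×ˢ X) ×ˢ (X ×ˢ X ×ˢ Y)).filter
      fun q => q.2.2.1 - q.1.2 = q.2.2.2 * (q.2.1 - q.1.1) with hMdef
  -- N counts triples for a fixed pair
  set N : ZMod p × ZMod p → ℕ := fun xt =>
    ((X ×ˢ X ×ˢ Y).filter fun t : ZMod p × ZMod p × ZMod p =>
      t.2.1 - xt.2 = t.2.2 * (t.1 - xt.1)).card with hNdef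
  -- Step 1 : M.card = ∑ over pairs of N
  have step1 : M.card = ∑ xt ∈ X ×ˢ X, N xt := by
    rw [card_eq_sum_card_fiberwise (f := Prod.fst) (t := X ×ˢ X)
      (fun q hq => (mem_product.1 (mem_filter.1 hq).1).1)]
    refine sum_congr rfl fun xt hxt => ?_
    refine card_nbij' (fun q => q.2) (fun t => (xt, t)) ?_ ?_ ?_ ?_
    · rintro q hq
      simp only [M, mem_coe, mem_filter, mem_product] at hq ⊢
      obtain ⟨⟨⟨_, h2⟩, he⟩, h1⟩ := hq
      subst h1
      exact ⟨h2, he⟩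
    · rintro t ht
      simp only [mem_coe, mem_filter, mem_product] at ht
      simp only [M, mem_coe, mem_filter, mem_product]
      exact ⟨⟨⟨mem_product.1 hxt, ht.1⟩, ht.2⟩, trivial⟩
    · rintro q hq
      simp only [mem_coe, mem_filter] at hq
      rw [← hq.2]
    · intro t _; rfl
  -- fibers over y of M have the same cardinality as energy sets
  have step3 : ∀ y ∈ Y, (M.filter fun q => q.2.2.2 = y).card =
      (((X ×ˢ X) ×ˢ (X ×ˢ X)).filter
        fun q : (ZMod p × ZMod p) × (ZMod p × ZMod p) =>
          q.1.1 + y * q.1.2 = q.2.1 + y * q.2.2).card := by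
    intro y hy
    refine card_nbij' (fun q => ((q.2.2.1, q.1.1), (q.1.2, q.2.1)))
      (fun e => ((e.1.2, e.2.1), (e.2.2, e.1.1, y))) ?_ ?_ ?_ ?_
    · rintro ⟨⟨a, b⟩, ⟨c, d, y'⟩⟩ hq
      simp only [M, mem_coe, mem_filter, mem_product] at hq ⊢
      obtain ⟨⟨⟨⟨ha, hb⟩, hc, hd, _⟩, he⟩, hyy⟩ := hq
      subst hyy
      refine ⟨⟨⟨hd, ha⟩, hb, hc⟩, ?_⟩
      linear_combination he
    · rintro ⟨⟨a, b⟩, ⟨c, d⟩⟩ he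
      simp only [M, mem_coe, mem_filter, mem_product] at he ⊢
      obtain ⟨⟨⟨ha, hb⟩, hc, hd⟩, he⟩ := he
      refine ⟨⟨⟨⟨hb, hc⟩, hd, ha, hy⟩, ?_⟩, trivial⟩
      linear_combination he
    · rintro ⟨⟨a, b⟩, ⟨c, d, y'⟩⟩ hq
      simp only [M, mem_coe, mem_filter, mem_product] at hq
      obtain ⟨_, hyy⟩ := hq
      subst hyy; rfl
    · rintro ⟨⟨a, b⟩, ⟨c, d⟩⟩ _; rfl
  -- Step 2 : per-y Cauchy–Schwarz
  have step2 : ∀ y ∈ Y, (X.card : ℝ) ^ 4 ≤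
      K * ((M.filter fun q => q.2.2.2 = y).card : ℝ) := by
    intro y hy
    have hg : ∀ a ∈ X ×ˢ X, (a.1 + y * a.2 : ZMod p) ∈ X + y • X := by
      rintro ⟨a, b⟩ hab
      rw [mem_product] at hab
      exact add_mem_add hab.1 (by
        rw [← smul_eq_mul]; exact smul_mem_smul_finset hab.2)
    have hcs := cs_count (X ×ˢ X) (X + y • X)
      (fun a : ZMod p × ZMod p => a.1 + y * a.2) hg
    rw [card_product] at hcs
    have hKle : ((X + y • X).card : ℝ) ≤ K := by
      rw [hKdef]; exact le_sup' (fun y => ((X + y • X).card : ℝ)) hy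
    have hEnonneg : (0:ℝ) ≤ ((((X ×ˢ X) ×ˢ (X ×ˢ X)).filter
        fun q : (ZMod p × ZMod p) × (ZMod p × ZMod p) =>
          q.1.1 + y * q.1.2 = q.2.1 + y * q.2.2).card : ℝ) := Nat.cast_nonneg _
    rw [step3 y hy]
    calc (X.card : ℝ) ^ 4 = ((X.card * X.card : ℕ) : ℝ) ^ 2 := by push_cast; ring
      _ ≤ ((X + y • X).card : ℝ) * _ := hcs
      _ ≤ K * _ := mul_le_mul_of_nonneg_right hKle hEnonneg
  -- Step 4 : sum over y
  have step4 : (Y.card : ℝ) * (X.card : ℝ) ^ 4 ≤ K * (M.card : ℝ) := by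
    have hfib : M.card = ∑ y ∈ Y, (M.filter fun q => q.2.2.2 = y).card :=
      card_eq_sum_card_fiberwise
        (fun q hq => (mem_product.1 (mem_product.1 (mem_product.1 (mem_filter.1 hq).1).2).2).2)
    calc (Y.card : ℝ) * (X.card : ℝ) ^ 4 = ∑ _y ∈ Y, (X.card : ℝ) ^ 4 := by
          rw [sum_const, nsmul_eq_mul]
      _ ≤ ∑ y ∈ Y, K * ((M.filter fun q => q.2.2.2 = y).card : ℝ) :=
          sum_le_sum step2
      _ = K * (M.card : ℝ) := by rw [← mul_sum, hfib]; push_cast; ring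
  -- Step 5 : pigeonhole
  have step5 : ∃ xt ∈ X ×ˢ X, (M.card : ℝ) / (X.card : ℝ) ^ 2 ≤ (N xt : ℝ) := by
    refine exists_le_of_sum_le (hX.product hX) ?_
    have : ∑ _xt ∈ X ×ˢ X, (M.card : ℝ) / (X.card : ℝ) ^ 2 = (M.card : ℝ) := by
      rw [sum_const, nsmul_eq_mul, card_product]
      push_cast
      field_simp
    rw [this, step1]
    push_cast
    exact le_rfl
  obtain ⟨xt, hxt, hle⟩ := step5
  rw [mem_product] at hxt
  refine ⟨xt.1, hxt.1, xt.2, hxt.2, ?_⟩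
  have hgoal : (Y.card : ℝ) * (X.card : ℝ) ^ 2 / K ≤ (N xt : ℝ) := by
    have h1 : (Y.card : ℝ) * (X.card : ℝ) ^ 2 / K ≤ (M.card : ℝ) / (X.card : ℝ) ^ 2 := by
      rw [div_le_div_iff₀ hK0 (by positivity)]
      calc (Y.card : ℝ) * (X.card : ℝ) ^ 2 * (X.card : ℝ) ^ 2
          = (Y.card : ℝ) * (X.card : ℝ) ^ 4 := by ring
        _ ≤ K * (M.card : ℝ) := step4
        _ = (M.card : ℝ) * K := mul_comm _ _
    exact h1.trans hle
  exact hgoal
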